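/- Let x(t) = r(t)s(t) be a positive h-energy solution of the anisotropic Kepler problem defined on (T⁻, T⁺), and suppose İ(t₀) = (d/dt)|x(t)|²|_{t=t₀} ≥ 0 for some t₀. Then for all t₀ < t₁ < t₂ < T⁺, ∫_{t₁}^{t₂} |ṡ(t)| dt ≤ (2/α) · √(2h r(t₀)^α + 2U_max) / (2h)^{(2+α)/4} · (t₁ - t₀)^{-α/2}, where U_max = max{U(s) : s ∈ S^{d-1}}. -/

import Mathlib

open Real Set
open scoped RealInnerProductSpace

private lemma euler_identity {d : ℕ} {α : ℝ} (U : EuclideanSpace ℝ (Fin d) → ℝ)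
    (hUhom : ∀ y : EuclideanSpace ℝ (Fin d), y ≠ 0 →
      U y = ‖y‖ ^ (-α) * U (‖y‖⁻¹ • y))
    (hUC2 : ContDiffOn ℝ 2 U {y : EuclideanSpace ℝ (Fin d) | y ≠ 0})
    (y : EuclideanSpace ℝ (Fin d)) (hy : y ≠ 0) :
    ⟪y, gradient U y⟫ = -α * U y := by
  have ho : IsOpen {z : EuclideanSpace ℝ (Fin d) | z ≠ 0} := isOpen_ne
  have hdiff : DifferentiableAt ℝ U y :=
    ((hUC2.differentiableOn (by norm_num)).differentiableAt (ho.mem_nhds hy))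
  have hgrad := hdiff.hasGradientAt
  have hfd : HasFDerivAt U (InnerProductSpace.toDual ℝ _ (gradient U y)) y :=
    hgrad.hasFDerivAt
  have hsmul : HasDerivAt (fun c : ℝ => c • y) y 1 := by
    simpa using (hasDerivAt_id (1 : ℝ)).smul_const y
  have hfd' : HasFDerivAt U (InnerProductSpace.toDual ℝ _ (gradient U y)) ((1:ℝ) • y) := by
    rwa [one_smul]
  have hc : HasDerivAt (fun c : ℝ => U (c • y))
      ((InnerProductSpace.toDual ℝ _ (gradient U y)) y) 1 :=
    hfd'.comp_hasDerivAt 1 hsmul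
  have hypos : 0 < ‖y‖ := norm_pos_iff.mpr hy
  have heq : (fun c : ℝ => U (c • y)) =ᶠ[nhds 1] fun c => c ^ (-α) * U y := by
    filter_upwards [eventually_gt_nhds (by norm_num : (0:ℝ) < 1)] with c hc
    have hcy : c • y ≠ 0 := smul_ne_zero (ne_of_gt hc) hy
    have hn : ‖c • y‖ = c * ‖y‖ := by
      rw [norm_smul, Real.norm_eq_abs, abs_of_pos hc]
    have hs : (c * ‖y‖)⁻¹ • (c • y) = ‖y‖⁻¹ • y := by
      rw [smul_smul]
      congr 1
      field_simp
    rw [hUhom _ hcy, hn, hs, Real.mul_rpow hc.le (norm_nonneg y), hUhom _ hy]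
    ring
  have hc2 : HasDerivAt (fun c : ℝ => c ^ (-α) * U y) (-α * U y) 1 := by
    have := (Real.hasDerivAt_rpow_const (p := -α) (Or.inl one_ne_zero)).mul_const (U y)
    simpa using this
  have hc' : HasDerivAt (fun c : ℝ => U (c • y)) (-α * U y) 1 :=
    hc2.congr_of_eventuallyEq heq
  have := hc.unique hc'
  rw [InnerProductSpace.toDual_apply_apply] at this
  rw [real_inner_comm]
  exact this

set_option maxHeartbeats 1000000 in
/-- Integral bound on the angular velocity of a positive-energy solution of the
anisotropic Kepler problem, when `İ(t₀) ≥ 0`. -/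
theorem angular_velocity_integral_bound {d : ℕ} (hd : 2 ≤ d)
    (α h Tm Tp t₀ Umax : ℝ)
    (hα : α ∈ Set.Ioo (0:ℝ) 2) (hh : 0 < h)
    (U : EuclideanSpace ℝ (Fin d) → ℝ)
    (hUhom : ∀ y : EuclideanSpace ℝ (Fin d), y ≠ 0 →
      U y = ‖y‖ ^ (-α) * U (‖y‖⁻¹ • y))
    (hUC2 : ContDiffOn ℝ 2 U {y : EuclideanSpace ℝ (Fin d) | y ≠ 0})
    (hUpos : ∀ y : EuclideanSpace ℝ (Fin d), ‖y‖ = 1 → 0 < U y)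
    (hUmax : IsGreatest (U '' {y : EuclideanSpace ℝ (Fin d) | ‖y‖ = 1}) Umax)
    (x x' : ℝ → EuclideanSpace ℝ (Fin d))
    (hx0 : ∀ t ∈ Set.Ioo Tm Tp, x t ≠ 0)
    (hx1 : ∀ t ∈ Set.Ioo Tm Tp, HasDerivAt x (x' t) t)
    (hx2 : ∀ t ∈ Set.Ioo Tm Tp, HasDerivAt x' (gradient U (x t)) t)
    (hE : ∀ t ∈ Set.Ioo Tm Tp, (1/2) * ‖x' t‖^2 - U (x t) = h)
    (ht₀ : t₀ ∈ Set.Ioo Tm Tp)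
    (hI : 0 ≤ deriv (fun τ => ‖x τ‖^2) t₀) :
    ∀ t₁ t₂ : ℝ, t₀ < t₁ → t₁ < t₂ → t₂ < Tp →
      (∫ t in t₁..t₂, ‖deriv (fun u => ‖x u‖⁻¹ • x u) t‖)
        ≤ (2/α) * Real.sqrt (2*h*‖x t₀‖ ^ α + 2*Umax) / (2*h) ^ ((2+α)/4)
            * (t₁ - t₀) ^ (-(α/2)) := by
  obtain ⟨hα0, hα2⟩ := hα
  intro t₁ t₂ h01 h12 h2p
  have hsubJ : Set.Icc t₀ t₂ ⊆ Set.Ioo Tm Tp := fun t ht =>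
    ⟨lt_of_lt_of_le ht₀.1 ht.1, lt_of_le_of_lt ht.2 h2p⟩
  have hsub12 : Set.Icc t₁ t₂ ⊆ Set.Icc t₀ t₂ := Set.Icc_subset_Icc h01.le le_rfl
  have hrpos : ∀ t ∈ Set.Ioo Tm Tp, 0 < ‖x t‖ := fun t ht => norm_pos_iff.mpr (hx0 t ht)
  have hEuler : ∀ t ∈ Set.Ioo Tm Tp, ⟪x t, gradient U (x t)⟫ = -α * U (x t) :=
    fun t ht => euler_identity U hUhom hUC2 (x t) (hx0 t ht)
  have hsphere : ∀ t ∈ Set.Ioo Tm Tp, ‖(‖x t‖⁻¹ • x t : EuclideanSpace ℝ (Fin d))‖ = 1 := by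
    intro t ht
    rw [norm_smul, Real.norm_eq_abs, abs_inv, abs_of_pos (hrpos t ht)]
    exact inv_mul_cancel₀ (ne_of_gt (hrpos t ht))
  have hUxpos : ∀ t ∈ Set.Ioo Tm Tp, 0 < U (x t) := by
    intro t ht
    rw [hUhom _ (hx0 t ht)]
    exact mul_pos (Real.rpow_pos_of_pos (hrpos t ht) _) (hUpos _ (hsphere t ht))
  set φ : ℝ → ℝ := fun t => ⟪x t, x' t⟫ with hφdef
  have hE2 : ∀ t ∈ Set.Ioo Tm Tp, ‖x' t‖^2 = 2*h + 2*U (x t) := by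
    intro t ht; have := hE t ht; linarith
  have hφ' : ∀ t ∈ Set.Ioo Tm Tp, HasDerivAt φ (2*h + (2-α) * U (x t)) t := by
    intro t ht
    have h1 := (hx1 t ht).inner ℝ (hx2 t ht)
    have h2 : ⟪x t, gradient U (x t)⟫ + ⟪x' t, x' t⟫ = 2*h + (2-α)*U (x t) := by
      rw [hEuler t ht, real_inner_self_eq_norm_sq, hE2 t ht]; ring
    rw [← h2]
    exact h1
  have hI' : ∀ t ∈ Set.Ioo Tm Tp, HasDerivAt (fun τ => ‖x τ‖^2) (2 * φ t) t := by
    intro t ht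
    have h1 := (hx1 t ht).inner ℝ (hx1 t ht)
    have h2 : ⟪x t, x' t⟫ + ⟪x' t, x t⟫ = 2 * φ t := by
      rw [real_inner_comm (x t) (x' t)]; rw [hφdef]; ring
    rw [← h2]
    have h3 : (fun τ => ⟪x τ, x τ⟫) = fun τ => ‖x τ‖^2 := by
      funext τ; exact real_inner_self_eq_norm_sq _
    rw [← h3]
    exact h1
  have hφ₀ : 0 ≤ φ t₀ := by
    have := (hI' t₀ ht₀).deriv
    rw [this] at hI; linarith
  have key : ∀ f f' : ℝ → ℝ, (∀ t ∈ Set.Icc t₀ t₂, HasDerivAt f (f' t) t) →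
      (∀ t ∈ Set.Icc t₀ t₂, 0 ≤ f' t) → MonotoneOn f (Set.Icc t₀ t₂) := by
    intro f f' hd' hn
    apply monotoneOn_of_deriv_nonneg (convex_Icc _ _)
    · exact fun t ht => (hd' t ht).continuousAt.continuousWithinAt
    · intro t ht
      rw [interior_Icc] at ht
      exact (hd' t (Set.Ioo_subset_Icc_self ht)).differentiableAt.differentiableWithinAt
    · intro t ht
      rw [interior_Icc] at ht
      rw [(hd' t (Set.Ioo_subset_Icc_self ht)).deriv]
      exact hn t (Set.Ioo_subset_Icc_self ht)
  have ht₀m : t₀ ∈ Set.Icc t₀ t₂ := Set.left_mem_Icc.mpr (h01.le.trans h12.le)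
  have hφlb : ∀ t ∈ Set.Icc t₀ t₂, 2*h*(t - t₀) ≤ φ t := by
    have hmono := key (fun t => φ t - 2*h*(t - t₀)) (fun t => (2-α) * U (x t))
      (by
        intro t ht
        have h1 := (hφ' t (hsubJ ht)).sub ((((hasDerivAt_id t).sub_const t₀)).const_mul (2*h))
        refine h1.congr_deriv ?_
        ring)
      (by
        intro t ht
        show (0:ℝ) ≤ (2 - α) * U (x t)
        have := hUxpos t (hsubJ ht)
        nlinarith)
    intro t ht
    have h1' : φ t₀ - 2*h*(t₀ - t₀) ≤ φ t - 2*h*(t - t₀) := hmono ht₀m ht ht.1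
    nlinarith [h1']
  have hφnn : ∀ t ∈ Set.Icc t₀ t₂, 0 ≤ φ t := by
    intro t ht
    have := hφlb t ht
    have h4 : 0 ≤ 2*h*(t - t₀) :=
      mul_nonneg (by linarith : (0:ℝ) ≤ 2*h) (by linarith [ht.1] : (0:ℝ) ≤ t - t₀)
    linarith
  have hrlb : ∀ t ∈ Set.Icc t₀ t₂, Real.sqrt (2*h) * (t - t₀) ≤ ‖x t‖ := by
    have hmono := key (fun t => ‖x t‖^2 - 2*h*(t - t₀)^2) (fun t => 2 * φ t - 4*h*(t - t₀))
      (by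
        intro t ht
        have h1 := (hI' t (hsubJ ht)).sub
          (((((hasDerivAt_id t).sub_const t₀)).pow 2).const_mul (2*h))
        refine h1.congr_deriv ?_
        simp only [id_eq]
        ring)
      (by
        intro t ht
        show (0:ℝ) ≤ 2 * φ t - 4*h*(t - t₀)
        have := hφlb t ht
        linarith)
    intro t ht
    have h1 : ‖x t₀‖^2 - 2*h*(t₀ - t₀)^2 ≤ ‖x t‖^2 - 2*h*(t - t₀)^2 := hmono ht₀m ht ht.1
    have h1' : 2*h*(t - t₀)^2 ≤ ‖x t‖^2 := by
      nlinarith [sq_nonneg ‖x t₀‖]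
    have h2 : 0 ≤ t - t₀ := by linarith [ht.1]
    have h3 := Real.sqrt_le_sqrt h1'
    rwa [Real.sqrt_sq (norm_nonneg _), Real.sqrt_mul (by linarith : (0:ℝ) ≤ 2*h),
      Real.sqrt_sq h2] at h3
  have hr' : ∀ t ∈ Set.Ioo Tm Tp, HasDerivAt (fun τ => ‖x τ‖) (φ t / ‖x t‖) t := by
    intro t ht
    have hne : ‖x t‖^2 ≠ 0 := ne_of_gt (pow_pos (hrpos t ht) 2)
    have h1 := (Real.hasDerivAt_sqrt hne).comp t (hI' t ht)
    have hfun : (fun τ => Real.sqrt (‖x τ‖^2)) = fun τ => ‖x τ‖ := by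
      funext τ; exact Real.sqrt_sq (norm_nonneg _)
    have h2 : HasDerivAt (fun τ => Real.sqrt (‖x τ‖^2)) (1/(2*Real.sqrt (‖x t‖^2)) * (2 * φ t)) t := h1
    rw [hfun, Real.sqrt_sq (norm_nonneg _)] at h2
    convert h2 using 1
    rw [show 1/(2*‖x t‖) * (2*φ t) = 2*φ t/(2*‖x t‖) by ring]
    exact (mul_div_mul_left (φ t) ‖x t‖ two_ne_zero).symm
  have hvsq : ∀ t ∈ Set.Ioo Tm Tp, (φ t / ‖x t‖)^2 ≤ ‖x' t‖^2 := by
    intro t ht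
    have h1 : |φ t| ≤ ‖x t‖ * ‖x' t‖ := abs_real_inner_le_norm _ _
    have hr0 := hrpos t ht
    rw [div_pow, div_le_iff₀ (by positivity)]
    calc φ t ^ 2 = |φ t|^2 := (sq_abs _).symm
    _ ≤ (‖x t‖ * ‖x' t‖)^2 := by
        apply pow_le_pow_left₀ (abs_nonneg _) h1
    _ = ‖x' t‖^2 * ‖x t‖^2 := by ring
  have hΓ' : ∀ t ∈ Set.Ioo Tm Tp, HasDerivAt
      (fun τ => ‖x τ‖ ^ α * (h - (φ τ / ‖x τ‖)^2 / 2))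
      (‖x t‖ ^ α * (φ t / ‖x t‖) * (2 - α) * ((φ t / ‖x t‖)^2 - ‖x' t‖^2) / (2 * ‖x t‖)) t := by
    intro t ht
    have hr0 := hrpos t ht
    have hrne : ‖x t‖ ≠ 0 := ne_of_gt hr0
    have h1 : HasDerivAt (fun τ => ‖x τ‖ ^ α) ((φ t / ‖x t‖) * α * ‖x t‖ ^ (α - 1)) t :=
      (hr' t ht).rpow_const (Or.inl hrne)
    have hv : HasDerivAt (fun τ => φ τ / ‖x τ‖)
        ((2*h + (2-α)*U (x t) - (φ t / ‖x t‖)^2) / ‖x t‖) t := by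
      have h2 := (hφ' t ht).div (hr' t ht) hrne
      refine h2.congr_deriv ?_
      field_simp
    have h3 : HasDerivAt (fun τ => h - (φ τ / ‖x τ‖)^2/2)
        (-((φ t / ‖x t‖) * ((2*h + (2-α)*U (x t) - (φ t / ‖x t‖)^2) / ‖x t‖))) t := by
      have h4 := (hasDerivAt_const t h).sub ((hv.pow 2).div_const 2)
      refine h4.congr_deriv ?_
      ring
    have h5 := h1.mul h3
    refine h5.congr_deriv ?_
    rw [Real.rpow_sub hr0, Real.rpow_one, hE2 t ht]
    field_simp
    ring
  have hΓb : ∀ t ∈ Set.Icc t₁ t₂,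
      ‖x t‖ ^ α * (h - (φ t / ‖x t‖)^2 / 2) ≤ h * ‖x t₀‖ ^ α := by
    have hanti : AntitoneOn (fun τ => ‖x τ‖ ^ α * (h - (φ τ / ‖x τ‖)^2 / 2))
        (Set.Icc t₀ t₂) := by
      apply antitoneOn_of_deriv_nonpos (convex_Icc _ _)
      · exact fun t ht => (hΓ' t (hsubJ ht)).continuousAt.continuousWithinAt
      · intro t ht
        rw [interior_Icc] at ht
        exact (hΓ' t (hsubJ (Set.Ioo_subset_Icc_self ht))).differentiableAt.differentiableWithinAt
      · intro t ht
        rw [interior_Icc] at ht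
        have htK := Set.Ioo_subset_Icc_self ht
        rw [(hΓ' t (hsubJ htK)).deriv]
        have hr0 := hrpos t (hsubJ htK)
        have hvnn : 0 ≤ φ t / ‖x t‖ := div_nonneg (hφnn t htK) hr0.le
        have h2 := hvsq t (hsubJ htK)
        have hrα : 0 ≤ ‖x t‖ ^ α := (Real.rpow_pos_of_pos hr0 α).le
        apply div_nonpos_of_nonpos_of_nonneg
        · exact mul_nonpos_of_nonneg_of_nonpos
            (mul_nonneg (mul_nonneg hrα hvnn) (by linarith)) (by linarith)
        · positivity
    intro t ht
    have ht' : t ∈ Set.Icc t₀ t₂ := hsub12 ht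
    have h1 := hanti ht₀m ht' (h01.le.trans ht.1)
    have hr₀ := hrpos t₀ ht₀
    have hα' := Real.rpow_pos_of_pos hr₀ α
    nlinarith [sq_nonneg (φ t₀ / ‖x t₀‖), h1]
  set sd : ℝ → EuclideanSpace ℝ (Fin d) :=
    fun t => (‖x t‖)⁻¹ • x' t + (-(φ t / ‖x t‖) / ‖x t‖^2) • x t with hsddef
  have hs' : ∀ t ∈ Set.Ioo Tm Tp, HasDerivAt (fun u => ‖x u‖⁻¹ • x u) (sd t) t := by
    intro t ht
    have hrne : ‖x t‖ ≠ 0 := ne_of_gt (hrpos t ht)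
    have hinv : HasDerivAt (fun τ => (‖x τ‖)⁻¹) (-(φ t / ‖x t‖) / ‖x t‖^2) t :=
      (hr' t ht).inv hrne
    exact hinv.smul (hx1 t ht)
  have hsdnsq : ∀ t ∈ Set.Ioo Tm Tp,
      ‖sd t‖^2 = (‖x' t‖^2 - (φ t / ‖x t‖)^2) / ‖x t‖^2 := by
    intro t ht
    have hr0 := hrpos t ht
    have hrne : ‖x t‖ ≠ 0 := ne_of_gt hr0
    have hexp : ‖(‖x t‖)⁻¹ • x' t + (-(φ t / ‖x t‖) / ‖x t‖^2) • x t‖^2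
        = (‖x t‖)⁻¹ * ((‖x t‖)⁻¹ * ‖x' t‖^2)
          + 2 * ((‖x t‖)⁻¹ * ((-(φ t / ‖x t‖) / ‖x t‖^2) * φ t))
          + (-(φ t / ‖x t‖) / ‖x t‖^2) * ((-(φ t / ‖x t‖) / ‖x t‖^2) * ‖x t‖^2) := by
      rw [← real_inner_self_eq_norm_sq, real_inner_add_add_self]
      simp only [real_inner_smul_left, real_inner_smul_right]
      rw [real_inner_comm (x t) (x' t)]
      simp only [hφdef, real_inner_self_eq_norm_sq]
      ring
    simp only [hsddef]
    rw [hexp]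
    field_simp
    ring
  set q : ℝ := 2*h*‖x t₀‖ ^ α + 2*Umax with hqdef
  have hUmax' : ∀ t ∈ Set.Ioo Tm Tp, U (‖x t‖⁻¹ • x t) ≤ Umax := by
    intro t ht
    exact hUmax.2 ⟨_, hsphere t ht, rfl⟩
  have hqpos : 0 < q := by
    have h2 := hUpos _ (hsphere t₀ ht₀)
    have h3 := hUmax' t₀ ht₀
    have h4 := Real.rpow_pos_of_pos (hrpos t₀ ht₀) α
    rw [hqdef]
    nlinarith
  set C : ℝ := Real.sqrt q * (2*h) ^ (-((2+α)/4)) with hCdef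
  have hpt : ∀ t ∈ Set.Icc t₁ t₂, ‖sd t‖ ≤ C * (t - t₀) ^ (-((2+α)/2)) := by
    intro t ht
    have htJ : t ∈ Set.Ioo Tm Tp := hsubJ (hsub12 ht)
    have htK : t ∈ Set.Icc t₀ t₂ := hsub12 ht
    have hr0 := hrpos t htJ
    have ht0 : 0 < t - t₀ := by
      have : t₁ ≤ t := ht.1
      linarith
    have hB : Real.sqrt (2*h) * (t - t₀) ≤ ‖x t‖ := hrlb t htK
    have hBpos : 0 < Real.sqrt (2*h) * (t - t₀) :=
      mul_pos (Real.sqrt_pos.mpr (by linarith)) ht0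
    have hUs : U (‖x t‖⁻¹ • x t) = ‖x t‖ ^ α * U (x t) := by
      rw [hUhom (x t) (hx0 t htJ), ← mul_assoc, ← Real.rpow_add hr0]
      norm_num
    have h2Γ : (‖x' t‖^2 - (φ t / ‖x t‖)^2) * ‖x t‖ ^ α
        = 2 * (‖x t‖ ^ α * (h - (φ t / ‖x t‖)^2/2)) + 2 * (U (‖x t‖⁻¹ • x t)) := by
      rw [hUs, hE2 t htJ]; ring
    have hq1 : (‖x' t‖^2 - (φ t / ‖x t‖)^2) * ‖x t‖ ^ α ≤ q := by
      rw [h2Γ, hqdef]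
      have hb1 := hΓb t ht
      have hb2 := hUmax' t htJ
      linarith
    have hsq : ‖sd t‖^2 ≤ q / ‖x t‖ ^ ((2:ℝ)+α) := by
      rw [hsdnsq t htJ, Real.rpow_add hr0]
      have hpow2 : ‖x t‖ ^ (2:ℝ) = ‖x t‖^2 := by
        rw [show (2:ℝ) = ((2:ℕ):ℝ) by norm_num, Real.rpow_natCast]
      rw [hpow2, div_le_div_iff₀ (by positivity) (by positivity)]
      have h3 := mul_le_mul_of_nonneg_right hq1 (sq_nonneg ‖x t‖)
      nlinarith [h3]
    have hstep : ‖sd t‖ ≤ Real.sqrt q * (Real.sqrt (2*h) * (t - t₀)) ^ (-((2+α)/2)) := by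
      have hmono : ‖x t‖ ^ (-((2:ℝ)+α)) ≤ (Real.sqrt (2*h) * (t-t₀)) ^ (-((2:ℝ)+α)) :=
        Real.rpow_le_rpow_of_nonpos hBpos hB (by linarith)
      have h4 : ‖sd t‖^2 ≤ q * (Real.sqrt (2*h)*(t-t₀)) ^ (-((2:ℝ)+α)) := by
        have he : q / ‖x t‖ ^ ((2:ℝ)+α) = q * ‖x t‖ ^ (-((2:ℝ)+α)) := by
          rw [Real.rpow_neg hr0.le, div_eq_mul_inv]
        calc ‖sd t‖^2 ≤ q / ‖x t‖ ^ ((2:ℝ)+α) := hsq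
        _ = q * ‖x t‖ ^ (-((2:ℝ)+α)) := he
        _ ≤ _ := mul_le_mul_of_nonneg_left hmono hqpos.le
      calc ‖sd t‖ = Real.sqrt (‖sd t‖^2) := (Real.sqrt_sq (norm_nonneg _)).symm
      _ ≤ Real.sqrt (q * (Real.sqrt (2*h)*(t-t₀)) ^ (-((2:ℝ)+α))) := Real.sqrt_le_sqrt h4
      _ = Real.sqrt q * Real.sqrt ((Real.sqrt (2*h)*(t-t₀)) ^ (-((2:ℝ)+α))) :=
          Real.sqrt_mul hqpos.le _
      _ = Real.sqrt q * (Real.sqrt (2*h)*(t-t₀)) ^ (-((2+α)/2)) := by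
          have hsq2 : (Real.sqrt (2*h)*(t-t₀)) ^ (-((2:ℝ)+α))
              = ((Real.sqrt (2*h)*(t-t₀)) ^ (-((2+α)/2)))^2 := by
            rw [← Real.rpow_natCast ((Real.sqrt (2*h)*(t-t₀)) ^ (-((2+α)/2))) 2,
              ← Real.rpow_mul hBpos.le]
            congr 1
            push_cast
            ring
          rw [hsq2, Real.sqrt_sq (Real.rpow_nonneg hBpos.le _)]
    have hBsplit : (Real.sqrt (2*h)*(t-t₀)) ^ (-((2+α)/2))
        = (2*h) ^ (-((2+α)/4)) * (t - t₀) ^ (-((2+α)/2)) := by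
      rw [Real.mul_rpow (Real.sqrt_nonneg _) ht0.le]
      congr 1
      rw [Real.sqrt_eq_rpow, ← Real.rpow_mul (by linarith : (0:ℝ) ≤ 2*h)]
      congr 1
      ring
    calc ‖sd t‖ ≤ _ := hstep
    _ = C * (t - t₀) ^ (-((2+α)/2)) := by rw [hBsplit, hCdef]; ring
  have hcx : ContinuousOn x (Set.Icc t₁ t₂) := fun t ht =>
    ((hx1 t (hsubJ (hsub12 ht))).continuousAt).continuousWithinAt
  have hcx' : ContinuousOn x' (Set.Icc t₁ t₂) := fun t ht =>
    ((hx2 t (hsubJ (hsub12 ht))).continuousAt).continuousWithinAt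
  have hcr : ContinuousOn (fun t => ‖x t‖) (Set.Icc t₁ t₂) := hcx.norm
  have hrne12 : ∀ t ∈ Set.Icc t₁ t₂, ‖x t‖ ≠ 0 :=
    fun t ht => ne_of_gt (hrpos t (hsubJ (hsub12 ht)))
  have hcφ : ContinuousOn φ (Set.Icc t₁ t₂) := hcx.inner hcx'
  have hsdcont : ContinuousOn (fun t => ‖sd t‖) (Set.Icc t₁ t₂) := by
    apply ContinuousOn.norm
    simp only [hsddef]
    apply ContinuousOn.add
    · exact (hcr.inv₀ hrne12).smul hcx'
    · apply ContinuousOn.smul (f := fun t => -(φ t / ‖x t‖) / ‖x t‖ ^ 2) _ hcx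
      apply ContinuousOn.div ((hcφ.div hcr hrne12).neg) (hcr.pow 2)
      intro t ht
      exact pow_ne_zero 2 (hrne12 t ht)
  have hgcont : ContinuousOn (fun t => C * (t - t₀) ^ (-((2+α)/2))) (Set.Icc t₁ t₂) := by
    apply ContinuousOn.mul continuousOn_const
    apply ContinuousOn.rpow_const (continuousOn_id.sub continuousOn_const)
    intro t ht
    left
    have : t₀ < t := lt_of_lt_of_le h01 ht.1
    exact sub_ne_zero.mpr (ne_of_gt this)
  have hcongr : (∫ t in t₁..t₂, ‖deriv (fun u => ‖x u‖⁻¹ • x u) t‖)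
      = ∫ t in t₁..t₂, ‖sd t‖ := by
    apply intervalIntegral.integral_congr
    intro t ht
    rw [Set.uIcc_of_le h12.le] at ht
    show ‖deriv (fun u => ‖x u‖⁻¹ • x u) t‖ = ‖sd t‖
    rw [(hs' t (hsubJ (hsub12 ht))).deriv]
  rw [hcongr]
  have hint1 : IntervalIntegrable (fun t => ‖sd t‖) MeasureTheory.volume t₁ t₂ := by
    apply ContinuousOn.intervalIntegrable
    rwa [Set.uIcc_of_le h12.le]
  have hint2 : IntervalIntegrable (fun t => C * (t - t₀) ^ (-((2+α)/2)))
      MeasureTheory.volume t₁ t₂ := by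
    apply ContinuousOn.intervalIntegrable
    rwa [Set.uIcc_of_le h12.le]
  have h1p : (0:ℝ) < t₁ - t₀ := by linarith
  have h2p' : (0:ℝ) < t₂ - t₀ := by linarith
  calc (∫ t in t₁..t₂, ‖sd t‖)
      ≤ ∫ t in t₁..t₂, C * (t - t₀) ^ (-((2+α)/2)) :=
        intervalIntegral.integral_mono_on h12.le hint1 hint2 hpt
    _ ≤ (2/α) * Real.sqrt q / (2*h) ^ ((2+α)/4) * (t₁ - t₀) ^ (-(α/2)) := by
        rw [intervalIntegral.integral_const_mul]
        have hshift : (∫ t in t₁..t₂, (t - t₀) ^ (-((2+α)/2)))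
            = ∫ u in (t₁ - t₀)..(t₂ - t₀), u ^ (-((2+α)/2)) :=
          intervalIntegral.integral_comp_sub_right (fun u => u ^ (-((2+α)/2))) t₀
        rw [hshift]
        have hp : -((2+α)/2) ≠ -1 := by intro hcon; linarith
        have h0mem : (0:ℝ) ∉ Set.uIcc (t₁ - t₀) (t₂ - t₀) := by
          rw [Set.uIcc_of_le (by linarith)]
          intro hmem
          exact absurd hmem.1 (by linarith)
        rw [integral_rpow (Or.inr ⟨hp, h0mem⟩)]
        have he : -((2+α)/2) + 1 = -(α/2) := by ring
        rw [he]
        have hx2nn : 0 ≤ (t₂ - t₀) ^ (-(α/2)) := Real.rpow_nonneg h2p'.le _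
        have hPnn : 0 ≤ Real.sqrt q * ((2*h) ^ ((2+α)/4))⁻¹ := by positivity
        rw [hCdef, Real.rpow_neg (by linarith : (0:ℝ) ≤ 2*h)]
        have key2 : Real.sqrt q * ((2*h) ^ ((2+α)/4))⁻¹
              * (((t₂-t₀) ^ (-(α/2)) - (t₁-t₀) ^ (-(α/2))) / (-(α/2)))
            = (2/α) * (Real.sqrt q * ((2*h) ^ ((2+α)/4))⁻¹)
              * ((t₁-t₀) ^ (-(α/2)) - (t₂-t₀) ^ (-(α/2))) := by
          field_simp
          ring
        rw [key2]
        have hrhs : (2:ℝ)/α * Real.sqrt q / (2*h) ^ ((2+α)/4) * (t₁-t₀) ^ (-(α/2))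
            = (2/α) * (Real.sqrt q * ((2*h) ^ ((2+α)/4))⁻¹) * (t₁-t₀) ^ (-(α/2)) := by
          ring
        rw [hrhs]
        have h2α : (0:ℝ) < 2/α := by positivity
        nlinarith [mul_nonneg (mul_nonneg h2α.le hPnn) hx2nn]
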